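/- Let n and i be integers with 1 ≤ i ≤ n−1. Then the number of permutations π of length n which avoid both 1243 and 2143 and satisfy π(i+1) = n equals |S_i(1243, 2143)| · |S_{n−i}(1243, 2143)|. -/

import Mathlib

/-- `π` contains the pattern `σ`. -/
def PContains {k n : ℕ} (σ : Equiv.Perm (Fin k)) (π : Equiv.Perm (Fin n)) : Prop :=
  ∃ f : Fin k → Fin n, StrictMono f ∧ ∀ a b : Fin k, π (f a) < π (f b) ↔ σ a < σ b

/-- `π` avoids the pattern `σ`. -/
def PAvoids {k n : ℕ} (σ : Equiv.Perm (Fin k)) (π : Equiv.Perm (Fin n)) : Prop :=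
  ¬ PContains σ π

/-- The pattern 1243 (in one-line notation, 1-based). -/
def p1243 : Equiv.Perm (Fin 4) := ⟨![0, 1, 3, 2], ![0, 1, 3, 2], by decide, by decide⟩

/-- The pattern 2143 (in one-line notation, 1-based). -/
def p2143 : Equiv.Perm (Fin 4) := ⟨![1, 0, 3, 2], ![1, 0, 3, 2], by decide, by decide⟩

/-- `π` avoids both 1243 and 2143. -/
def AvoidsBoth {n : ℕ} (π : Equiv.Perm (Fin n)) : Prop :=
  PAvoids p1243 π ∧ PAvoids p2143 π

/-- `τ_k(π)`: the number of increasing subsequences of length `k` in `π`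
(with the convention `τ_0 = 0`). -/
noncomputable def tauPerm (k : ℕ) {n : ℕ} (π : Equiv.Perm (Fin n)) : ℕ :=
  if k = 0 then 0 else
    Nat.card {f : Fin k → Fin n // StrictMono f ∧ StrictMono (fun a => π (f a))}

/-- The number of occurrences (subsequences of type `σ`) of the pattern `σ` in `π`. -/
noncomputable def numOcc {k n : ℕ} (σ : Equiv.Perm (Fin k)) (π : Equiv.Perm (Fin n)) : ℕ :=
  Nat.card {f : Fin k → Fin n // StrictMono f ∧ ∀ a b : Fin k, π (f a) < π (f b) ↔ σ a < σ b}


variable {i m : ℕ}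

def glueFun (hi : 0 < i) (hm : 0 < m) (σ : Equiv.Perm (Fin i)) (ρ : Equiv.Perm (Fin m))
    (pos : Fin (i + m)) : Fin (i + m) :=
  if h : (pos : ℕ) < i then
    if (σ ⟨pos, h⟩ : ℕ) = 0 then ⟨(ρ ⟨0, hm⟩ : ℕ), by have := (ρ ⟨0, hm⟩).2; omega⟩
    else ⟨m - 1 + (σ ⟨pos, h⟩ : ℕ), by have := (σ ⟨pos, h⟩).2; omega⟩
  else if h2 : (pos : ℕ) = i then ⟨i + m - 1, by omega⟩
  else ⟨(ρ ⟨(pos : ℕ) - i, by have := pos.2; omega⟩ : ℕ), by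
    have := (ρ ⟨(pos : ℕ) - i, by have := pos.2; omega⟩).2; omega⟩

lemma glueFun_left_min (hi : 0 < i) (hm : 0 < m) (σ : Equiv.Perm (Fin i)) (ρ : Equiv.Perm (Fin m))
    (pos : Fin (i + m)) (h : (pos : ℕ) < i) (h0 : (σ ⟨pos, h⟩ : ℕ) = 0) :
    (glueFun hi hm σ ρ pos : ℕ) = (ρ ⟨0, hm⟩ : ℕ) := by
  simp [glueFun, h, h0]

lemma glueFun_left_nonmin (hi : 0 < i) (hm : 0 < m) (σ : Equiv.Perm (Fin i)) (ρ : Equiv.Perm (Fin m))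
    (pos : Fin (i + m)) (h : (pos : ℕ) < i) (h0 : (σ ⟨pos, h⟩ : ℕ) ≠ 0) :
    (glueFun hi hm σ ρ pos : ℕ) = m - 1 + (σ ⟨pos, h⟩ : ℕ) := by
  simp [glueFun, h, h0]

lemma glueFun_mid (hi : 0 < i) (hm : 0 < m) (σ : Equiv.Perm (Fin i)) (ρ : Equiv.Perm (Fin m))
    (pos : Fin (i + m)) (h : (pos : ℕ) = i) :
    (glueFun hi hm σ ρ pos : ℕ) = i + m - 1 := by
  simp [glueFun, h]

lemma glueFun_right (hi : 0 < i) (hm : 0 < m) (σ : Equiv.Perm (Fin i)) (ρ : Equiv.Perm (Fin m))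
    (pos : Fin (i + m)) (h : i < (pos : ℕ)) (hj : (pos : ℕ) - i < m) :
    (glueFun hi hm σ ρ pos : ℕ) = (ρ ⟨(pos : ℕ) - i, hj⟩ : ℕ) := by
  have h1 : ¬ (pos : ℕ) < i := by omega
  have h2 : ¬ (pos : ℕ) = i := by omega
  simp [glueFun, h1, h2]

lemma glueFun_inj (hi : 0 < i) (hm : 0 < m) (σ : Equiv.Perm (Fin i)) (ρ : Equiv.Perm (Fin m)) :
    Function.Injective (glueFun hi hm σ ρ) := by
  intro p q hpq
  have hpq' : (glueFun hi hm σ ρ p : ℕ) = (glueFun hi hm σ ρ q : ℕ) := by rw [hpq]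
  have hp2 := p.2
  have hq2 := q.2
  have hρ0 := (ρ ⟨0, hm⟩).2
  -- helper to compute values
  rcases lt_trichotomy (p : ℕ) i with hp | hp | hp <;>
    rcases lt_trichotomy (q : ℕ) i with hq | hq | hq
  · -- both left
    by_cases hp0 : (σ ⟨p, hp⟩ : ℕ) = 0 <;> by_cases hq0 : (σ ⟨q, hq⟩ : ℕ) = 0
    · have : σ ⟨p, hp⟩ = σ ⟨q, hq⟩ := Fin.ext (by omega)
      have := σ.injective this
      exact Fin.ext (by simpa [Fin.ext_iff] using this)
    · rw [glueFun_left_min hi hm σ ρ p hp hp0, glueFun_left_nonmin hi hm σ ρ q hq hq0] at hpq'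
      have := (σ ⟨q, hq⟩).2
      omega
    · rw [glueFun_left_nonmin hi hm σ ρ p hp hp0, glueFun_left_min hi hm σ ρ q hq hq0] at hpq'
      omega
    · rw [glueFun_left_nonmin hi hm σ ρ p hp hp0, glueFun_left_nonmin hi hm σ ρ q hq hq0] at hpq'
      have : σ ⟨p, hp⟩ = σ ⟨q, hq⟩ := Fin.ext (by omega)
      have := σ.injective this
      exact Fin.ext (by simpa [Fin.ext_iff] using this)
  · -- left, mid
    rw [glueFun_mid hi hm σ ρ q hq] at hpq'
    by_cases hp0 : (σ ⟨p, hp⟩ : ℕ) = 0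
    · rw [glueFun_left_min hi hm σ ρ p hp hp0] at hpq'; omega
    · rw [glueFun_left_nonmin hi hm σ ρ p hp hp0] at hpq'
      have := (σ ⟨p, hp⟩).2; omega
  · -- left, right
    have hjq : (q : ℕ) - i < m := by omega
    rw [glueFun_right hi hm σ ρ q hq hjq] at hpq'
    have hρq := (ρ ⟨(q : ℕ) - i, hjq⟩).2
    by_cases hp0 : (σ ⟨p, hp⟩ : ℕ) = 0
    · rw [glueFun_left_min hi hm σ ρ p hp hp0] at hpq'
      have : ρ ⟨0, hm⟩ = ρ ⟨(q : ℕ) - i, hjq⟩ := Fin.ext (by omega)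
      have := ρ.injective this
      rw [Fin.ext_iff] at this
      simp at this
      omega
    · rw [glueFun_left_nonmin hi hm σ ρ p hp hp0] at hpq'; omega
  · rw [glueFun_mid hi hm σ ρ p hp] at hpq'
    by_cases hq0 : (σ ⟨q, hq⟩ : ℕ) = 0
    · rw [glueFun_left_min hi hm σ ρ q hq hq0] at hpq'; omega
    · rw [glueFun_left_nonmin hi hm σ ρ q hq hq0] at hpq'
      have := (σ ⟨q, hq⟩).2; omega
  · exact Fin.ext (by omega)
  · have hjq : (q : ℕ) - i < m := by omega
    rw [glueFun_mid hi hm σ ρ p hp, glueFun_right hi hm σ ρ q hq hjq] at hpq'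
    have := (ρ ⟨(q : ℕ) - i, hjq⟩).2; omega
  · have hjp : (p : ℕ) - i < m := by omega
    rw [glueFun_right hi hm σ ρ p hp hjp] at hpq'
    have hρp := (ρ ⟨(p : ℕ) - i, hjp⟩).2
    by_cases hq0 : (σ ⟨q, hq⟩ : ℕ) = 0
    · rw [glueFun_left_min hi hm σ ρ q hq hq0] at hpq'
      have : ρ ⟨(p : ℕ) - i, hjp⟩ = ρ ⟨0, hm⟩ := Fin.ext (by omega)
      have := ρ.injective this
      rw [Fin.ext_iff] at this
      simp at this
      omega
    · rw [glueFun_left_nonmin hi hm σ ρ q hq hq0] at hpq'; omega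
  · have hjp : (p : ℕ) - i < m := by omega
    rw [glueFun_right hi hm σ ρ p hp hjp, glueFun_mid hi hm σ ρ q hq] at hpq'
    have := (ρ ⟨(p : ℕ) - i, hjp⟩).2; omega
  · have hjp : (p : ℕ) - i < m := by omega
    have hjq : (q : ℕ) - i < m := by omega
    rw [glueFun_right hi hm σ ρ p hp hjp, glueFun_right hi hm σ ρ q hq hjq] at hpq'
    have : ρ ⟨(p : ℕ) - i, hjp⟩ = ρ ⟨(q : ℕ) - i, hjq⟩ := Fin.ext (by omega)
    have := ρ.injective this
    rw [Fin.ext_iff] at this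
    simp at this
    exact Fin.ext (by omega)

noncomputable def glueP (hi : 0 < i) (hm : 0 < m) (σ : Equiv.Perm (Fin i)) (ρ : Equiv.Perm (Fin m)) :
    Equiv.Perm (Fin (i + m)) :=
  Equiv.ofBijective _ (Finite.injective_iff_bijective.mp (glueFun_inj hi hm σ ρ))

lemma glueP_apply (hi : 0 < i) (hm : 0 < m) (σ : Equiv.Perm (Fin i)) (ρ : Equiv.Perm (Fin m))
    (pos : Fin (i + m)) : glueP hi hm σ ρ pos = glueFun hi hm σ ρ pos := rfl

-- left block is order-isomorphic to σ
lemma glue_left_cmp (hi : 0 < i) (hm : 0 < m) (σ : Equiv.Perm (Fin i)) (ρ : Equiv.Perm (Fin m))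
    (p q : Fin (i + m)) (hp : (p : ℕ) < i) (hq : (q : ℕ) < i) :
    (glueFun hi hm σ ρ p < glueFun hi hm σ ρ q ↔ σ ⟨p, hp⟩ < σ ⟨q, hq⟩) := by
  have hρ0 := (ρ ⟨0, hm⟩).2
  rw [Fin.lt_def, Fin.lt_def]
  by_cases hp0 : (σ ⟨p, hp⟩ : ℕ) = 0 <;> by_cases hq0 : (σ ⟨q, hq⟩ : ℕ) = 0
  · rw [glueFun_left_min hi hm σ ρ p hp hp0, glueFun_left_min hi hm σ ρ q hq hq0]; omega
  · rw [glueFun_left_min hi hm σ ρ p hp hp0, glueFun_left_nonmin hi hm σ ρ q hq hq0]; omega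
  · rw [glueFun_left_nonmin hi hm σ ρ p hp hp0, glueFun_left_min hi hm σ ρ q hq hq0]; omega
  · rw [glueFun_left_nonmin hi hm σ ρ p hp hp0, glueFun_left_nonmin hi hm σ ρ q hq hq0]; omega

lemma contains_left (hi : 0 < i) (hm : 0 < m) (σ : Equiv.Perm (Fin i)) (ρ : Equiv.Perm (Fin m))
    {k : ℕ} (τ : Equiv.Perm (Fin k)) (h : PContains τ σ) : PContains τ (glueP hi hm σ ρ) := by
  obtain ⟨f, hf, hiso⟩ := h
  refine ⟨fun a => ⟨(f a : ℕ), by have := (f a).2; omega⟩, ?_, ?_⟩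
  · intro a b hab
    have := hf hab
    rw [Fin.lt_def] at this ⊢
    simpa using this
  · intro a b
    rw [glueP_apply, glueP_apply,
      glue_left_cmp hi hm σ ρ _ _ (by have := (f a).2; simpa using this)
        (by have := (f b).2; simpa using this)]
    have ha : (⟨(f a : ℕ), _⟩ : Fin i) = f a := Fin.ext rfl
    rw [show (⟨(f a : ℕ), by have := (f a).2; simpa using this⟩ : Fin i) = f a from Fin.ext rfl,
      show (⟨(f b : ℕ), by have := (f b).2; simpa using this⟩ : Fin i) = f b from Fin.ext rfl]
    exact hiso a b

lemma contains_right (hi : 0 < i) (hm : 0 < m) (σ : Equiv.Perm (Fin i)) (ρ : Equiv.Perm (Fin m))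
    {k : ℕ} (τ : Equiv.Perm (Fin k)) (h : PContains τ ρ) : PContains τ (glueP hi hm σ ρ) := by
  obtain ⟨f, hf, hiso⟩ := h
  have hσ0 := (σ.symm ⟨0, hi⟩).2
  -- the position of the minimum of σ
  set a₀ : ℕ := (σ.symm ⟨0, hi⟩ : ℕ) with ha₀
  refine ⟨fun a => if (f a : ℕ) = 0 then ⟨a₀, by omega⟩ else ⟨i + (f a : ℕ), by have := (f a).2; omega⟩,
    ?_, ?_⟩
  · intro a b hab
    have hfab := hf hab
    rw [Fin.lt_def] at hfab
    by_cases h0a : (f a : ℕ) = 0 <;> by_cases h0b : (f b : ℕ) = 0 <;>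
      simp only [h0a, h0b, if_true, if_false, Fin.lt_def] <;> omega
  · have key : ∀ a, (glueP hi hm σ ρ (if (f a : ℕ) = 0 then ⟨a₀, by omega⟩
        else ⟨i + (f a : ℕ), by have := (f a).2; omega⟩) : ℕ) = (ρ (f a) : ℕ) := by
      intro a
      by_cases h0a : (f a : ℕ) = 0
      · simp only [h0a, if_true]
        rw [glueP_apply, glueFun_left_min hi hm σ ρ _ (by simpa using hσ0)
          (by rw [show (⟨a₀, _⟩ : Fin i) = σ.symm ⟨0, hi⟩ from Fin.ext rfl]; simp)]
        have : f a = ⟨0, hm⟩ := Fin.ext h0a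
        rw [this]
      · simp only [h0a, if_false]
        have hfa := (f a).2
        rw [glueP_apply, glueFun_right hi hm σ ρ _ (by simp only [Fin.val_mk]; omega)
          (by simp only [Fin.val_mk]; omega)]
        congr 2
        exact Fin.ext (by simp only [Fin.val_mk]; omega)
    intro a b
    rw [Fin.lt_def, key a, key b, ← Fin.lt_def]
    exact hiso a b

lemma contains_glue (hi : 0 < i) (hm : 0 < m) (σ : Equiv.Perm (Fin i)) (ρ : Equiv.Perm (Fin m))
    (τ : Equiv.Perm (Fin 4)) (hτ03 : τ 0 < τ 3) (hτ13 : τ 1 < τ 3) (hτ32 : τ 3 < τ 2)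
    (h : PContains τ (glueP hi hm σ ρ)) : PContains τ σ ∨ PContains τ ρ := by
  obtain ⟨f, hf, hiso⟩ := h
  set g := glueP hi hm σ ρ with hg
  have h01 : f 0 < f 1 := hf (by decide)
  have h12 : f 1 < f 2 := hf (by decide)
  have h23 : f 2 < f 3 := hf (by decide)
  rw [Fin.lt_def] at h01 h12 h23
  have v03 : (g (f 0) : ℕ) < (g (f 3) : ℕ) := (hiso 0 3).mpr hτ03
  have v13 : (g (f 1) : ℕ) < (g (f 3) : ℕ) := (hiso 1 3).mpr hτ13
  have v32 : (g (f 3) : ℕ) < (g (f 2) : ℕ) := (hiso 3 2).mpr hτ32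
  have hρ0 := (ρ ⟨0, hm⟩).2
  -- basic fact: value at a left position with nonzero σ is ≥ m; at left min is ρ0 < m
  have hleftlow : ∀ p : Fin (i + m), (hp : (p : ℕ) < i) → (g p : ℕ) < m →
      (σ ⟨p, hp⟩ : ℕ) = 0 ∧ (g p : ℕ) = (ρ ⟨0, hm⟩ : ℕ) := by
    intro p hp hlow
    by_cases h0 : (σ ⟨p, hp⟩ : ℕ) = 0
    · exact ⟨h0, glueFun_left_min hi hm σ ρ p hp h0⟩
    · rw [hg, glueP_apply] at hlow
      rw [glueFun_left_nonmin hi hm σ ρ p hp h0] at hlow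
      omega
  rcases lt_trichotomy ((f 3 : ℕ)) i with hd | hd | hd
  · -- all four in the left block
    left
    have hall : ∀ k : Fin 4, (f k : ℕ) < i := by
      intro k
      have hk3 : k ≤ 3 := by fin_cases k <;> decide
      have := hf.monotone hk3
      rw [Fin.le_def] at this
      omega
    refine ⟨fun k => ⟨(f k : ℕ), hall k⟩, ?_, ?_⟩
    · intro a b hab
      have := hf hab
      rw [Fin.lt_def] at this ⊢
      exact this
    · intro a b
      rw [← hiso a b, hg, glueP_apply, glueP_apply]
      exact (glue_left_cmp hi hm σ ρ (f a) (f b) (hall a) (hall b)).symm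
  · -- f 3 = i : impossible
    exfalso
    have e3 : (g (f 3) : ℕ) = i + m - 1 := glueFun_mid hi hm σ ρ (f 3) hd
    have := (g (f 2)).2
    omega
  · -- f 3 > i
    have hj3 : (f 3 : ℕ) - i < m := by have := (f 3).2; omega
    have e3 : (g (f 3) : ℕ) = (ρ ⟨(f 3 : ℕ) - i, hj3⟩ : ℕ) := glueFun_right hi hm σ ρ (f 3) hd hj3
    have hv3m : (g (f 3) : ℕ) < m := by rw [e3]; exact (ρ _).2
    rcases lt_trichotomy ((f 1 : ℕ)) i with hb | hb | hb
    · -- two left positions with low values: impossible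
      exfalso
      have hb0 : (f 0 : ℕ) < i := by omega
      obtain ⟨hz0, _⟩ := hleftlow (f 0) hb0 (by omega)
      obtain ⟨hz1, _⟩ := hleftlow (f 1) hb (by omega)
      have : (⟨(f 0 : ℕ), hb0⟩ : Fin i) = ⟨(f 1 : ℕ), hb⟩ := σ.injective (Fin.ext (by omega))
      rw [Fin.ext_iff] at this
      simp only [Fin.val_mk] at this
      omega
    · -- f 1 = i : impossible
      exfalso
      have e1 : (g (f 1) : ℕ) = i + m - 1 := glueFun_mid hi hm σ ρ (f 1) hb
      omega
    · -- f 1, f 2, f 3 > i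
      right
      have hc : i < (f 2 : ℕ) := by omega
      rcases lt_trichotomy ((f 0 : ℕ)) i with ha | ha | ha
      · -- f 0 is the left minimum position
        obtain ⟨hz0, he0⟩ := hleftlow (f 0) ha (by omega)
        set gmap : Fin 4 → Fin m := fun k =>
          if k = 0 then ⟨0, hm⟩ else ⟨(f k : ℕ) - i, by have := (f k).2; omega⟩ with hgmap
        have key : ∀ k : Fin 4, (g (f k) : ℕ) = (ρ (gmap k) : ℕ) := by
          intro k
          fin_cases k
          · simpa [hgmap] using he0
          · simpa [hgmap, hg, glueP_apply] using glueFun_right hi hm σ ρ (f 1) hb (by have := (f 1).2; omega)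
          · simpa [hgmap, hg, glueP_apply] using glueFun_right hi hm σ ρ (f 2) hc (by have := (f 2).2; omega)
          · simpa [hgmap, hg, glueP_apply] using glueFun_right hi hm σ ρ (f 3) hd (by have := (f 3).2; omega)
        refine ⟨gmap, ?_, ?_⟩
        · intro a b hab
          have hfab : (f a : ℕ) < (f b : ℕ) := by
            have := hf hab
            rwa [Fin.lt_def] at this
          rw [Fin.lt_def] at hab ⊢
          have hb0 : (b : ℕ) ≠ 0 := by omega
          have hmono : ∀ k : Fin 4, (1 : ℕ) ≤ (k : ℕ) → i < (f k : ℕ) := by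
            intro k hk
            have : f 1 ≤ f k := hf.monotone (by rw [Fin.le_def]; simpa using hk)
            rw [Fin.le_def] at this
            omega
          have egb : (gmap b : ℕ) = (f b : ℕ) - i := by
            simp only [hgmap]
            rw [if_neg (fun h => hb0 (by rw [h]; rfl))]
          by_cases ha0 : (a : ℕ) = 0
          · have ega : (gmap a : ℕ) = 0 := by
              simp only [hgmap]
              rw [if_pos (Fin.ext ha0)]
            have := hmono b (by omega)
            omega
          · have ega : (gmap a : ℕ) = (f a : ℕ) - i := by
              simp only [hgmap]
              rw [if_neg (fun h => ha0 (by rw [h]; rfl))]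
            have h1 := hmono a (by omega)
            have h2 := hmono b (by omega)
            omega
        · intro a b
          rw [← hiso a b, Fin.lt_def, Fin.lt_def, ← key a, ← key b]
      · -- f 0 = i : impossible
        exfalso
        have e0 : (g (f 0) : ℕ) = i + m - 1 := glueFun_mid hi hm σ ρ (f 0) ha
        omega
      · -- all four right
        set gmap : Fin 4 → Fin m := fun k =>
          ⟨(f k : ℕ) - i, by have := (f k).2; omega⟩ with hgmap
        have hgt : ∀ k : Fin 4, i < (f k : ℕ) := by
          intro k
          have : f 0 ≤ f k := hf.monotone (Fin.zero_le k)
          rw [Fin.le_def] at this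
          omega
        have key : ∀ k : Fin 4, (g (f k) : ℕ) = (ρ (gmap k) : ℕ) := fun k =>
          glueFun_right hi hm σ ρ (f k) (hgt k) (by have := (f k).2; omega)
        refine ⟨gmap, ?_, ?_⟩
        · intro a b hab
          have := hf hab
          rw [Fin.lt_def] at this ⊢
          simp only [hgmap, Fin.val_mk]
          have := hgt a
          omega
        · intro a b
          rw [← hiso a b, Fin.lt_def, Fin.lt_def, ← key a, ← key b]

lemma avoidsBoth_glue (hi : 0 < i) (hm : 0 < m) (σ : Equiv.Perm (Fin i)) (ρ : Equiv.Perm (Fin m)) :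
    AvoidsBoth (glueP hi hm σ ρ) ↔ AvoidsBoth σ ∧ AvoidsBoth ρ := by
  constructor
  · intro ⟨h1, h2⟩
    exact ⟨⟨fun hc => h1 (contains_left hi hm σ ρ _ hc), fun hc => h2 (contains_left hi hm σ ρ _ hc)⟩,
      ⟨fun hc => h1 (contains_right hi hm σ ρ _ hc), fun hc => h2 (contains_right hi hm σ ρ _ hc)⟩⟩
  · intro ⟨⟨ha1, ha2⟩, ⟨hb1, hb2⟩⟩
    constructor
    · intro hc
      rcases contains_glue hi hm σ ρ p1243 (by decide) (by decide) (by decide) hc with h | h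
      · exact ha1 h
      · exact hb1 h
    · intro hc
      rcases contains_glue hi hm σ ρ p2143 (by decide) (by decide) (by decide) hc with h | h
      · exact ha2 h
      · exact hb2 h

lemma strictMono_vec4 {n : ℕ} (w x y z : Fin n) (h1 : w < x) (h2 : x < y) (h3 : y < z) :
    StrictMono ![w, x, y, z] := by
  intro a b hab
  fin_cases a <;> fin_cases b <;> first
    | exact absurd hab (by decide)
    | exact h1 | exact h2 | exact h3
    | exact h1.trans h2 | exact h2.trans h3 | exact (h1.trans h2).trans h3

lemma iso_vec4_1243 {n : ℕ} (π : Equiv.Perm (Fin n)) (w x y z : Fin n)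
    (h1 : π w < π x) (h2 : π x < π z) (h3 : π z < π y) :
    ∀ a b : Fin 4, π (![w, x, y, z] a) < π (![w, x, y, z] b) ↔ p1243 a < p1243 b := by
  intro a b
  fin_cases a <;> fin_cases b <;> first
    | exact iff_of_true h1 (by decide)
    | exact iff_of_true h2 (by decide)
    | exact iff_of_true h3 (by decide)
    | exact iff_of_true (h1.trans h2) (by decide)
    | exact iff_of_true (h2.trans h3) (by decide)
    | exact iff_of_true ((h1.trans h2).trans h3) (by decide)
    | exact iff_of_false (lt_irrefl _) (by decide)
    | exact iff_of_false (lt_asymm h1) (by decide)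
    | exact iff_of_false (lt_asymm h2) (by decide)
    | exact iff_of_false (lt_asymm h3) (by decide)
    | exact iff_of_false (lt_asymm (h1.trans h2)) (by decide)
    | exact iff_of_false (lt_asymm (h2.trans h3)) (by decide)
    | exact iff_of_false (lt_asymm ((h1.trans h2).trans h3)) (by decide)

lemma iso_vec4_2143 {n : ℕ} (π : Equiv.Perm (Fin n)) (w x y z : Fin n)
    (h1 : π x < π w) (h2 : π w < π z) (h3 : π z < π y) :
    ∀ a b : Fin 4, π (![w, x, y, z] a) < π (![w, x, y, z] b) ↔ p2143 a < p2143 b := by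
  intro a b
  fin_cases a <;> fin_cases b <;> first
    | exact iff_of_true h1 (by decide)
    | exact iff_of_true h2 (by decide)
    | exact iff_of_true h3 (by decide)
    | exact iff_of_true (h1.trans h2) (by decide)
    | exact iff_of_true (h2.trans h3) (by decide)
    | exact iff_of_true ((h1.trans h2).trans h3) (by decide)
    | exact iff_of_false (lt_irrefl _) (by decide)
    | exact iff_of_false (lt_asymm h1) (by decide)
    | exact iff_of_false (lt_asymm h2) (by decide)
    | exact iff_of_false (lt_asymm h3) (by decide)
    | exact iff_of_false (lt_asymm (h1.trans h2)) (by decide)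
    | exact iff_of_false (lt_asymm (h2.trans h3)) (by decide)
    | exact iff_of_false (lt_asymm ((h1.trans h2).trans h3)) (by decide)

lemma forbidden (hi : 0 < i) (hm : 0 < m) (π : Equiv.Perm (Fin (i + m))) (hav : AvoidsBoth π)
    (hmax : (π ⟨i, by omega⟩ : ℕ) = i + m - 1)
    (q1 q2 d : Fin (i + m)) (h12 : (q1 : ℕ) < q2) (h2i : (q2 : ℕ) < i) (hd : i < (d : ℕ))
    (hv1 : (π q1 : ℕ) < (π d : ℕ)) (hv2 : (π q2 : ℕ) < (π d : ℕ)) : False := by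
  set c : Fin (i + m) := ⟨i, by omega⟩ with hc
  have hdc : (π d : ℕ) < (π c : ℕ) := by
    have hne : (π d : ℕ) ≠ (π c : ℕ) := fun h => by
      have := π.injective (Fin.ext h)
      rw [Fin.ext_iff, hc] at this
      simp only [Fin.val_mk] at this
      omega
    have := (π d).2
    omega
  have hne12 : (π q1 : ℕ) ≠ (π q2 : ℕ) := fun h => by
    have := π.injective (Fin.ext h)
    rw [Fin.ext_iff] at this
    omega
  have hq12 : q1 < q2 := Fin.lt_def.mpr h12
  have hq2c : q2 < c := Fin.lt_def.mpr (by rw [hc]; simpa using h2i)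
  have hcd : c < d := Fin.lt_def.mpr (by rw [hc]; simpa using hd)
  rcases Nat.lt_or_ge (π q1 : ℕ) (π q2 : ℕ) with h | h
  · exact hav.1 ⟨![q1, q2, c, d], strictMono_vec4 q1 q2 c d hq12 hq2c hcd,
      iso_vec4_1243 π q1 q2 c d (Fin.lt_def.mpr h) (Fin.lt_def.mpr hv2) (Fin.lt_def.mpr hdc)⟩
  · exact hav.2 ⟨![q1, q2, c, d], strictMono_vec4 q1 q2 c d hq12 hq2c hcd,
      iso_vec4_2143 π q1 q2 c d (Fin.lt_def.mpr (by omega)) (Fin.lt_def.mpr hv1) (Fin.lt_def.mpr hdc)⟩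

lemma low_card (hi : 0 < i) (hm : 0 < m) (π : Equiv.Perm (Fin (i + m))) :
    (Finset.univ.filter fun q : Fin (i + m) => (π q : ℕ) < m).card = m := by
  have : (Finset.univ.filter fun q : Fin (i + m) => (π q : ℕ) < m) =
      Finset.image π.symm (Finset.Iio (⟨m, by omega⟩ : Fin (i + m))) := by
    ext q
    simp [Finset.mem_image, Fin.lt_def]
    constructor
    · intro h; exact ⟨π q, h, by simp⟩
    · rintro ⟨v, hv, rfl⟩; simpa using hv
  rw [this, Finset.card_image_of_injective _ π.symm.injective, Fin.card_Iio]

lemma not_low_max (hi : 0 < i) (hm : 0 < m) (π : Equiv.Perm (Fin (i + m)))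
    (hmax : (π ⟨i, by omega⟩ : ℕ) = i + m - 1) :
    (⟨i, by omega⟩ : Fin (i + m)) ∉ (Finset.univ.filter fun q : Fin (i + m) => (π q : ℕ) < m) := by
  simp [hmax]
  omega

lemma exists_low_left (hi : 0 < i) (hm : 0 < m) (π : Equiv.Perm (Fin (i + m)))
    (hmax : (π ⟨i, by omega⟩ : ℕ) = i + m - 1) :
    ∃ q : Fin (i + m), (q : ℕ) < i ∧ (π q : ℕ) < m := by
  by_contra hcon
  push_neg at hcon
  set L := Finset.univ.filter fun q : Fin (i + m) => (π q : ℕ) < m with hL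
  have hsub : L ⊆ Finset.Ioi (⟨i, by omega⟩ : Fin (i + m)) := by
    intro q hq
    rw [hL, Finset.mem_filter] at hq
    have h1 : ¬ (q : ℕ) < i := fun h => by have := hcon q h; omega
    have h2 : q ≠ ⟨i, by omega⟩ := by
      intro h
      rw [h] at hq
      omega
    have h2' : (q : ℕ) ≠ i := fun h => h2 (Fin.ext h)
    rw [Finset.mem_Ioi, Fin.lt_def]
    simp only [Fin.val_mk]
    omega
  have := Finset.card_le_card hsub
  rw [low_card hi hm π, Fin.card_Ioi] at this
  simp only [Fin.val_mk] at this
  omega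

lemma unique_low_left (hi : 0 < i) (hm : 0 < m) (π : Equiv.Perm (Fin (i + m)))
    (hav : AvoidsBoth π) (hmax : (π ⟨i, by omega⟩ : ℕ) = i + m - 1)
    (q1 q2 : Fin (i + m)) (h1 : (q1 : ℕ) < i) (l1 : (π q1 : ℕ) < m)
    (h2 : (q2 : ℕ) < i) (l2 : (π q2 : ℕ) < m) : q1 = q2 := by
  by_contra hne
  -- find d > i with π d ≥ m
  have hdex : ∃ d : Fin (i + m), i < (d : ℕ) ∧ m ≤ (π d : ℕ) := by
    by_contra hcon
    push_neg at hcon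
    set L := Finset.univ.filter fun q : Fin (i + m) => (π q : ℕ) < m with hL
    have hsub : insert q1 (insert q2 (Finset.Ioi (⟨i, by omega⟩ : Fin (i + m)))) ⊆ L := by
      intro q hq
      rw [hL, Finset.mem_filter]
      refine ⟨Finset.mem_univ _, ?_⟩
      rcases Finset.mem_insert.mp hq with rfl | hq
      · exact l1
      rcases Finset.mem_insert.mp hq with rfl | hq
      · exact l2
      · rw [Finset.mem_Ioi, Fin.lt_def] at hq
        simp only [Fin.val_mk] at hq
        exact hcon q hq
    have hcard := Finset.card_le_card hsub
    rw [low_card hi hm π] at hcard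
    have hq2Ioi : q2 ∉ Finset.Ioi (⟨i, by omega⟩ : Fin (i + m)) := by
      rw [Finset.mem_Ioi, Fin.lt_def]
      simp only [Fin.val_mk]
      omega
    have hq1in : q1 ∉ insert q2 (Finset.Ioi (⟨i, by omega⟩ : Fin (i + m))) := by
      rw [Finset.mem_insert]
      push_neg
      refine ⟨hne, ?_⟩
      rw [Finset.mem_Ioi, Fin.lt_def]
      simp only [Fin.val_mk]
      omega
    rw [Finset.card_insert_of_notMem hq1in, Finset.card_insert_of_notMem hq2Ioi,
      Fin.card_Ioi] at hcard
    simp only [Fin.val_mk] at hcard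
    omega
  obtain ⟨d, hdi, hdm⟩ := hdex
  have hvne : (q1 : ℕ) ≠ (q2 : ℕ) := fun h => hne (Fin.ext h)
  rcases Nat.lt_or_ge (q1 : ℕ) (q2 : ℕ) with hlt | hge
  · exact forbidden hi hm π hav hmax q1 q2 d hlt h2 hdi (by omega) (by omega)
  · exact forbidden hi hm π hav hmax q2 q1 d (by omega) h1 hdi (by omega) (by omega)

lemma right_low (hi : 0 < i) (hm : 0 < m) (π : Equiv.Perm (Fin (i + m)))
    (hav : AvoidsBoth π) (hmax : (π ⟨i, by omega⟩ : ℕ) = i + m - 1)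
    (d : Fin (i + m)) (hd : i < (d : ℕ)) : (π d : ℕ) < m := by
  by_contra hcon
  push_neg at hcon
  obtain ⟨a₀, ha₀i, ha₀m⟩ := exists_low_left hi hm π hmax
  set L := Finset.univ.filter fun q : Fin (i + m) => (π q : ℕ) < m with hL
  have hsub : L ⊆ insert a₀ ((Finset.Ioi (⟨i, by omega⟩ : Fin (i + m))).erase d) := by
    intro q hq
    rw [hL, Finset.mem_filter] at hq
    rw [Finset.mem_insert, Finset.mem_erase, Finset.mem_Ioi, Fin.lt_def]
    simp only [Fin.val_mk]
    rcases Nat.lt_or_ge (q : ℕ) i with h | h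
    · exact Or.inl (unique_low_left hi hm π hav hmax q a₀ h hq.2 ha₀i ha₀m)
    · right
      have hqne : (q : ℕ) ≠ i := by
        intro he
        have : q = (⟨i, by omega⟩ : Fin (i + m)) := Fin.ext he
        rw [this] at hq
        omega
      refine ⟨?_, by omega⟩
      intro he
      rw [he] at hq
      omega
  have hcard := Finset.card_le_card hsub
  rw [low_card hi hm π] at hcard
  have hdIoi : d ∈ Finset.Ioi (⟨i, by omega⟩ : Fin (i + m)) := by
    rw [Finset.mem_Ioi, Fin.lt_def]
    simpa using hd
  have := Finset.card_insert_le a₀ ((Finset.Ioi (⟨i, by omega⟩ : Fin (i + m))).erase d)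
  rw [Finset.card_erase_of_mem hdIoi, Fin.card_Ioi] at this
  simp only [Fin.val_mk] at this
  have hd2 := d.2
  omega

def embL (i m : ℕ) (q : Fin i) : Fin (i + m) := ⟨(q : ℕ), by have := q.2; omega⟩

def sfun (hi : 0 < i) (hm : 0 < m) (π : Equiv.Perm (Fin (i + m)))
    (hnm : ∀ q : Fin (i + m), (q : ℕ) ≠ i → (π q : ℕ) < i + m - 1) : Fin i → Fin i := fun q =>
  if (π (embL i m q) : ℕ) < m then ⟨0, hi⟩
  else ⟨(π (embL i m q) : ℕ) - (m - 1), by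
    have h1 := hnm (embL i m q) (by have := q.2; simp only [embL, Fin.val_mk]; omega)
    omega⟩

def rfun (hi : 0 < i) (hm : 0 < m) (π : Equiv.Perm (Fin (i + m)))
    (a₀ : Fin (i + m)) (ha₀m : (π a₀ : ℕ) < m)
    (hrl : ∀ d : Fin (i + m), i < (d : ℕ) → (π d : ℕ) < m) : Fin m → Fin m := fun j =>
  if h0 : (j : ℕ) = 0 then ⟨(π a₀ : ℕ), ha₀m⟩
  else ⟨(π ⟨i + (j : ℕ), by have := j.2; omega⟩ : ℕ),
    hrl _ (by simp only [Fin.val_mk]; omega)⟩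

lemma glue_surj (hi : 0 < i) (hm : 0 < m) (π : Equiv.Perm (Fin (i + m)))
    (hav : AvoidsBoth π) (hmax : (π ⟨i, by omega⟩ : ℕ) = i + m - 1) :
    ∃ (σ : Equiv.Perm (Fin i)) (ρ : Equiv.Perm (Fin m)), glueP hi hm σ ρ = π := by
  obtain ⟨a₀, ha₀i, ha₀m⟩ := exists_low_left hi hm π hmax
  have hrl := right_low hi hm π hav hmax
  have hnm : ∀ q : Fin (i + m), (q : ℕ) ≠ i → (π q : ℕ) < i + m - 1 := by
    intro q hq
    have hne : (π q : ℕ) ≠ i + m - 1 := by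
      intro h
      have h2 : π q = π ⟨i, by omega⟩ := Fin.ext (by rw [h, hmax])
      have h3 := π.injective h2
      rw [Fin.ext_iff] at h3
      simp only [Fin.val_mk] at h3
      exact hq h3
    have := (π q).2
    omega
  -- injectivity of sfun
  have hsinj : Function.Injective (sfun hi hm π hnm) := by
    intro q1 q2 heq
    unfold sfun at heq
    by_cases c1 : (π (embL i m q1) : ℕ) < m <;> by_cases c2 : (π (embL i m q2) : ℕ) < m
    · have : embL i m q1 = embL i m q2 :=
        unique_low_left hi hm π hav hmax _ _ (by simp only [embL, Fin.val_mk]; exact q1.2) c1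
          (by simp only [embL, Fin.val_mk]; exact q2.2) c2
      rw [Fin.ext_iff] at this
      simp only [embL, Fin.val_mk] at this
      exact Fin.ext this
    · rw [if_pos c1, if_neg c2] at heq
      rw [Fin.ext_iff] at heq
      simp only [Fin.val_mk] at heq
      have := hnm (embL i m q2) (by have := q2.2; simp only [embL, Fin.val_mk]; omega)
      omega
    · rw [if_neg c1, if_pos c2] at heq
      rw [Fin.ext_iff] at heq
      simp only [Fin.val_mk] at heq
      have := hnm (embL i m q1) (by have := q1.2; simp only [embL, Fin.val_mk]; omega)
      omega
    · rw [if_neg c1, if_neg c2] at heq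
      rw [Fin.ext_iff] at heq
      simp only [Fin.val_mk] at heq
      have heq2 : π (embL i m q1) = π (embL i m q2) := Fin.ext (by omega)
      have := π.injective heq2
      rw [Fin.ext_iff] at this
      simp only [embL, Fin.val_mk] at this
      exact Fin.ext this
  -- injectivity of rfun
  have hrinj : Function.Injective (rfun hi hm π a₀ ha₀m hrl) := by
    intro j1 j2 heq
    unfold rfun at heq
    by_cases c1 : (j1 : ℕ) = 0 <;> by_cases c2 : (j2 : ℕ) = 0
    · exact Fin.ext (by omega)
    · rw [dif_pos c1, dif_neg c2] at heq
      rw [Fin.ext_iff] at heq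
      simp only [Fin.val_mk] at heq
      have := π.injective (Fin.ext heq)
      rw [Fin.ext_iff] at this
      simp only [Fin.val_mk] at this
      omega
    · rw [dif_neg c1, dif_pos c2] at heq
      rw [Fin.ext_iff] at heq
      simp only [Fin.val_mk] at heq
      have := π.injective (Fin.ext heq.symm)
      rw [Fin.ext_iff] at this
      simp only [Fin.val_mk] at this
      omega
    · rw [dif_neg c1, dif_neg c2] at heq
      rw [Fin.ext_iff] at heq
      simp only [Fin.val_mk] at heq
      have := π.injective (Fin.ext heq)
      rw [Fin.ext_iff] at this
      simp only [Fin.val_mk] at this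
      exact Fin.ext (by omega)
  refine ⟨Equiv.ofBijective _ (Finite.injective_iff_bijective.mp hsinj),
    Equiv.ofBijective _ (Finite.injective_iff_bijective.mp hrinj), ?_⟩
  apply Equiv.ext
  intro pos
  apply Fin.ext
  rw [glueP_apply]
  rcases lt_trichotomy ((pos : ℕ)) i with hp | hp | hp
  · have hemb : embL i m (⟨(pos : ℕ), hp⟩ : Fin i) = pos := Fin.ext rfl
    by_cases hlow : (π pos : ℕ) < m
    · have hσ0 : ((Equiv.ofBijective _ (Finite.injective_iff_bijective.mp hsinj)) ⟨(pos : ℕ), hp⟩ : ℕ) = 0 := by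
        show ((sfun hi hm π hnm) ⟨(pos : ℕ), hp⟩ : ℕ) = 0
        unfold sfun
        rw [if_pos (show (π (embL i m ⟨(pos : ℕ), hp⟩) : ℕ) < m by rw [hemb]; exact hlow)]
      rw [glueFun_left_min hi hm _ _ pos hp hσ0]
      show ((rfun hi hm π a₀ ha₀m hrl) ⟨0, hm⟩ : ℕ) = (π pos : ℕ)
      unfold rfun
      rw [dif_pos rfl]
      have : a₀ = pos := unique_low_left hi hm π hav hmax a₀ pos ha₀i ha₀m hp hlow
      simp only [Fin.val_mk]
      rw [this]
    · have hσv : ((Equiv.ofBijective _ (Finite.injective_iff_bijective.mp hsinj)) ⟨(pos : ℕ), hp⟩ : ℕ) = (π pos : ℕ) - (m - 1) := by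
        show ((sfun hi hm π hnm) ⟨(pos : ℕ), hp⟩ : ℕ) = (π pos : ℕ) - (m - 1)
        unfold sfun
        rw [if_neg (show ¬ (π (embL i m ⟨(pos : ℕ), hp⟩) : ℕ) < m by rw [hemb]; exact hlow)]
        simp only [Fin.val_mk]
        rw [hemb]
      have hσne : ((Equiv.ofBijective _ (Finite.injective_iff_bijective.mp hsinj)) ⟨(pos : ℕ), hp⟩ : ℕ) ≠ 0 := by
        rw [hσv]; omega
      rw [glueFun_left_nonmin hi hm _ _ pos hp hσne, hσv]
      omega
  · rw [glueFun_mid hi hm _ _ pos hp]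
    have : pos = (⟨i, by omega⟩ : Fin (i + m)) := Fin.ext hp
    rw [this, hmax]
  · have hj : (pos : ℕ) - i < m := by have := pos.2; omega
    rw [glueFun_right hi hm _ _ pos hp hj]
    show ((rfun hi hm π a₀ ha₀m hrl) ⟨(pos : ℕ) - i, hj⟩ : ℕ) = (π pos : ℕ)
    unfold rfun
    rw [dif_neg (show ¬ ((⟨(pos : ℕ) - i, hj⟩ : Fin m) : ℕ) = 0 by simp only [Fin.val_mk]; omega)]
    simp only [Fin.val_mk]
    congr 2
    apply Fin.ext
    simp only [Fin.val_mk]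
    omega

lemma glue_pair_inj (hi : 0 < i) (hm : 0 < m) (σ σ' : Equiv.Perm (Fin i))
    (ρ ρ' : Equiv.Perm (Fin m)) (h : glueP hi hm σ ρ = glueP hi hm σ' ρ') :
    σ = σ' ∧ ρ = ρ' := by
  have key : ∀ pos : Fin (i + m), (glueFun hi hm σ ρ pos : ℕ) = (glueFun hi hm σ' ρ' pos : ℕ) := by
    intro pos
    have := Equiv.ext_iff.mp h pos
    rw [glueP_apply, glueP_apply] at this
    rw [this]
  have hρ0 := (ρ ⟨0, hm⟩).2
  have hρ'0 := (ρ' ⟨0, hm⟩).2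
  -- the minimum positions agree
  have hminiff : ∀ (pos : Fin (i + m)) (hp : (pos : ℕ) < i),
      (σ ⟨pos, hp⟩ : ℕ) = 0 ↔ (σ' ⟨pos, hp⟩ : ℕ) = 0 := by
    intro pos hp
    constructor
    · intro h0
      by_contra h0'
      have e1 := glueFun_left_min hi hm σ ρ pos hp h0
      have e2 := glueFun_left_nonmin hi hm σ' ρ' pos hp h0'
      have := key pos
      omega
    · intro h0
      by_contra h0'
      have e1 := glueFun_left_nonmin hi hm σ ρ pos hp h0'
      have e2 := glueFun_left_min hi hm σ' ρ' pos hp h0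
      have := key pos
      omega
  -- ρ agrees at 0
  have hρat0 : (ρ ⟨0, hm⟩ : ℕ) = (ρ' ⟨0, hm⟩ : ℕ) := by
    set q : Fin i := σ.symm ⟨0, hi⟩ with hq
    have hqi := q.2
    set pos : Fin (i + m) := ⟨(q : ℕ), by omega⟩ with hpos
    have hp : (pos : ℕ) < i := by rw [hpos]; simpa using hqi
    have hq0 : (σ ⟨pos, hp⟩ : ℕ) = 0 := by
      have : (⟨pos, hp⟩ : Fin i) = q := Fin.ext rfl
      rw [this, hq]
      simp
    have hq0' : (σ' ⟨pos, hp⟩ : ℕ) = 0 := (hminiff pos hp).mp hq0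
    have e1 := glueFun_left_min hi hm σ ρ pos hp hq0
    have e2 := glueFun_left_min hi hm σ' ρ' pos hp hq0'
    have := key pos
    omega
  -- ρ agrees elsewhere
  have hρ : ρ = ρ' := by
    apply Equiv.ext
    intro j
    by_cases hj : (j : ℕ) = 0
    · have : j = ⟨0, hm⟩ := Fin.ext hj
      rw [this]
      exact Fin.ext hρat0
    · set pos : Fin (i + m) := ⟨i + (j : ℕ), by have := j.2; omega⟩ with hpos
      have hip : i < (pos : ℕ) := by rw [hpos]; simp only [Fin.val_mk]; omega
      have hjlt : (pos : ℕ) - i < m := by rw [hpos]; simp only [Fin.val_mk]; have := j.2; omega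
      have e1 := glueFun_right hi hm σ ρ pos hip hjlt
      have e2 := glueFun_right hi hm σ' ρ' pos hip hjlt
      have hidx : (⟨(pos : ℕ) - i, hjlt⟩ : Fin m) = j := Fin.ext (by
        simp only [Fin.val_mk]
        show i + (j : ℕ) - i = (j : ℕ)
        omega)
      rw [hidx] at e1 e2
      have := key pos
      exact Fin.ext (by omega)
  refine ⟨?_, hρ⟩
  apply Equiv.ext
  intro q
  set pos : Fin (i + m) := ⟨(q : ℕ), by have := q.2; omega⟩ with hpos
  have hp : (pos : ℕ) < i := by rw [hpos]; simpa using q.2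
  have hqq : (⟨pos, hp⟩ : Fin i) = q := Fin.ext rfl
  by_cases h0 : (σ ⟨pos, hp⟩ : ℕ) = 0
  · have h0' := (hminiff pos hp).mp h0
    rw [hqq] at h0 h0'
    exact Fin.ext (by omega)
  · have h0' := fun hc => h0 ((hminiff pos hp).mpr hc)
    have e1 := glueFun_left_nonmin hi hm σ ρ pos hp h0
    have e2 := glueFun_left_nonmin hi hm σ' ρ' pos hp h0'
    have := key pos
    rw [hqq] at e1 e2
    exact Fin.ext (by omega)

lemma key_card (i m : ℕ) (hi : 0 < i) (hm : 0 < m) (hii : i < i + m) :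
    Nat.card {π : Equiv.Perm (Fin (i + m)) // AvoidsBoth π ∧ (π ⟨i, hii⟩ : ℕ) = i + m - 1} =
      Nat.card {σ : Equiv.Perm (Fin i) // AvoidsBoth σ} *
      Nat.card {ρ : Equiv.Perm (Fin m) // AvoidsBoth ρ} := by
  have hbij : Function.Bijective
      (fun x : {σ : Equiv.Perm (Fin i) // AvoidsBoth σ} × {ρ : Equiv.Perm (Fin m) // AvoidsBoth ρ} =>
        (⟨glueP hi hm x.1.1 x.2.1,
          (avoidsBoth_glue hi hm x.1.1 x.2.1).mpr ⟨x.1.2, x.2.2⟩,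
          glueFun_mid hi hm x.1.1 x.2.1 ⟨i, hii⟩ rfl⟩ :
          {π : Equiv.Perm (Fin (i + m)) // AvoidsBoth π ∧ (π ⟨i, hii⟩ : ℕ) = i + m - 1})) := by
    constructor
    · intro x y hxy
      have heq : glueP hi hm x.1.1 x.2.1 = glueP hi hm y.1.1 y.2.1 := congrArg Subtype.val hxy
      obtain ⟨h1, h2⟩ := glue_pair_inj hi hm _ _ _ _ heq
      exact Prod.ext (Subtype.ext h1) (Subtype.ext h2)
    · rintro ⟨π, hA, hcond⟩
      obtain ⟨σ, ρ, hglue⟩ := glue_surj hi hm π hA hcond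
      have hAg : AvoidsBoth (glueP hi hm σ ρ) := by rw [hglue]; exact hA
      obtain ⟨hσ, hρ⟩ := (avoidsBoth_glue hi hm σ ρ).mp hAg
      exact ⟨⟨⟨σ, hσ⟩, ⟨ρ, hρ⟩⟩, Subtype.ext hglue⟩
  calc Nat.card {π : Equiv.Perm (Fin (i + m)) // AvoidsBoth π ∧ (π ⟨i, hii⟩ : ℕ) = i + m - 1}
      = Nat.card ({σ : Equiv.Perm (Fin i) // AvoidsBoth σ} ×
        {ρ : Equiv.Perm (Fin m) // AvoidsBoth ρ}) :=
        Nat.card_congr (Equiv.ofBijective _ hbij).symm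
    _ = _ := Nat.card_prod _ _

/-- For 1 ≤ i ≤ n−1, the number of permutations π of length n avoiding
1243 and 2143 with π(i+1) = n (one-line, 1-based) equals
|S_i(1243,2143)| · |S_{n−i}(1243,2143)|. -/
theorem stmt_2 (n i : ℕ) (h1 : 1 ≤ i) (h2 : i ≤ n - 1) :
    Nat.card {π : Equiv.Perm (Fin n) // AvoidsBoth π ∧ (π ⟨i, by omega⟩ : ℕ) = n - 1} =
      Nat.card {π : Equiv.Perm (Fin i) // AvoidsBoth π} *
      Nat.card {π : Equiv.Perm (Fin (n - i)) // AvoidsBoth π} := by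
  obtain ⟨m, rfl⟩ : ∃ m, n = i + m := ⟨n - i, by omega⟩
  have hm : 0 < m := by omega
  have e : i + m - i = m := by omega
  rw [e]
  exact key_card i m (by omega) hm (by omega)
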